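/- Work with a finite oriented multigraph given by finite types V (vertices) and E (edges) together with maps s t : E → V, with V nonempty. Assume the multigraph has no loops and is connected. Let p be a natural number with 1 ≤ p, let θ : Equiv.Perm V satisfy θ ^ p = 1, and let M : Matrix E E ℤ be a chain map over θ that is HTC. Then M ^ (p + 1) = M. -/

import Mathlib

/-- The boundary matrix of a finite oriented multigraph with source map `s`
and target map `t`: `∂ v e = [v = t e] - [v = s e]`. -/
def boundaryMatrix {V E : Type*} [DecidableEq V] (s t : E → V) : Matrix V E ℤ :=
  fun v e => (if v = t e then 1 else 0) - (if v = s e then 1 else 0)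

/-- The permutation matrix of `θ`: `P_θ u w = [u = θ w]`. -/
def permMatrix {V : Type*} [DecidableEq V] (θ : Equiv.Perm V) : Matrix V V ℤ :=
  fun u w => if u = θ w then 1 else 0

/-- `M` is a chain map over the vertex permutation `θ`: `∂ * M = P_θ * ∂`. -/
def IsChainMap {V E : Type*} [DecidableEq V] [Fintype V] [Fintype E]
    (s t : E → V) (θ : Equiv.Perm V) (M : Matrix E E ℤ) : Prop :=
  boundaryMatrix s t * M = permMatrix θ * boundaryMatrix s t

/-- `M` is HTC (homotopic-to-a-constant-map condition): `M` annihilates the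
cycle space, i.e. the kernel of the boundary matrix. -/
def IsHTC {V E : Type*} [DecidableEq V] [Fintype E]
    (s t : E → V) (M : Matrix E E ℤ) : Prop :=
  ∀ x : E → ℤ, (boundaryMatrix s t).mulVec x = 0 → M.mulVec x = 0

/-- The multigraph has no loops: `s e ≠ t e` for every edge. -/
def NoLoops {V E : Type*} (s t : E → V) : Prop :=
  ∀ e : E, s e ≠ t e

/-- The multigraph is connected: the smallest equivalence relation relating
`s e` and `t e` for every edge `e` is the total relation. -/
def IsConn {V E : Type*} (s t : E → V) : Prop :=
  ∀ u v : V, Relation.EqvGen (fun a b => ∃ e : E, s e = a ∧ t e = b) u v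

lemma permMatrix_mul {V : Type*} [DecidableEq V] [Fintype V] (θ σ : Equiv.Perm V) :
    permMatrix θ * permMatrix σ = permMatrix (θ * σ) := by
  ext u w
  simp [permMatrix, Matrix.mul_apply, Finset.sum_ite_eq, Equiv.Perm.mul_apply]
  exact if_congr Iff.rfl rfl rfl

lemma permMatrix_one {V : Type*} [DecidableEq V] : permMatrix (1 : Equiv.Perm V) = 1 := by
  ext u w
  simp [permMatrix, Matrix.one_apply]
  exact if_congr Iff.rfl rfl rfl

lemma boundary_mul_pow {V E : Type*} [DecidableEq V] [Fintype V] [Fintype E] [DecidableEq E]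
    (s t : E → V) (θ : Equiv.Perm V) (M : Matrix E E ℤ)
    (hM : IsChainMap s t θ M) (n : ℕ) :
    boundaryMatrix s t * M ^ n = permMatrix (θ ^ n) * boundaryMatrix s t := by
  induction n with
  | zero => simp [permMatrix_one]
  | succ n ih =>
    rw [pow_succ', ← Matrix.mul_assoc (boundaryMatrix s t), hM, Matrix.mul_assoc, ih, ← Matrix.mul_assoc,
      permMatrix_mul, ← pow_succ']

theorem pow_succ_eq_self_of_chainMap_HTC
    {V E : Type*} [Fintype V] [DecidableEq V] [Fintype E] [DecidableEq E] [Nonempty V]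
    (s t : E → V) (hloop : NoLoops s t) (hconn : IsConn s t)
    (p : ℕ) (hp : 1 ≤ p) (θ : Equiv.Perm V) (hθ : θ ^ p = 1)
    (M : Matrix E E ℤ) (hM : IsChainMap s t θ M) (hMhtc : IsHTC s t M) :
    M ^ (p + 1) = M := by
  have hb : boundaryMatrix s t * (M ^ p - 1) = 0 := by
    rw [Matrix.mul_sub, boundary_mul_pow s t θ M hM, hθ, permMatrix_one]
    simp
  have hzero : M * (M ^ p - 1) = 0 := by
    ext e f
    have hx : (boundaryMatrix s t).mulVec (fun g => (M ^ p - 1) g f) = 0 := by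
      funext v
      have := congrFun (congrFun hb v) f
      simpa [Matrix.mul_apply, Matrix.mulVec, dotProduct] using this
    have := congrFun (hMhtc _ hx) e
    simpa [Matrix.mul_apply, Matrix.mulVec, dotProduct] using this
  have : M * M ^ p = M := by
    calc M * M ^ p = M * M ^ p - M * (M ^ p - 1) := by rw [hzero, sub_zero]
      _ = M := by rw [Matrix.mul_sub, mul_one, sub_sub_cancel]
  rw [pow_succ']
  exact this
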